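/- Let P ⊆ ℤ² be a finite set with |P| ≥ 2 and let v = (v_x, v_y) ∈ ℤ² be nonzero. Suppose w_v attains its maximum over P at a unique point of P and attains its minimum over P at a unique point of P. Then the number of integers m for which some point q of convexHull ℝ (peel(P)) has w_v(q) = m is at most the number of integers m for which some point q of convexHull ℝ P has w_v(q) = m, minus 2. (In particular, at least two lines of direction v through integer points that meet convexHull ℝ P no longer meet convexHull ℝ (peel(P)).) -/

import Mathlib

/-- Remove from `P` the extreme points (vertices) of its convex hull. -/
noncomputable def peel (P : Set (ℝ × ℝ)) : Set (ℝ × ℝ) :=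
  P \ (convexHull ℝ P).extremePoints ℝ

/-- For `v = (v_x, v_y)`, the linear functional `w_v(x, y) = v_x·y − v_y·x`;
two points lie on a common line of direction `v` iff `w_v` agrees on them. -/
def wv (v : ℤ × ℤ) (p : ℝ × ℝ) : ℝ :=
  (v.1 : ℝ) * p.2 - (v.2 : ℝ) * p.1

/-- If `pmax` is the strict maximizer of a linear functional `L` over a finite set `P`,
then `pmax` is an extreme point of the hull, and moreover the max face is a singleton. -/
lemma unique_max_extreme {P : Set (ℝ × ℝ)} (hP : P.Finite) (L : (ℝ × ℝ) →ₗ[ℝ] ℝ)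
    {pmax : ℝ × ℝ} (hmem : pmax ∈ P)
    (hlt : ∀ q ∈ P, q ≠ pmax → L q < L pmax) :
    pmax ∈ (convexHull ℝ P).extremePoints ℝ := by
  have hub : ∀ x ∈ convexHull ℝ P, L x ≤ L pmax := by
    intro x hx
    have hconv : Convex ℝ {w : ℝ × ℝ | L w ≤ L pmax} := convex_halfSpace_le (β := ℝ) L.isLinear (L pmax)
    have : convexHull ℝ P ⊆ {w : ℝ × ℝ | L w ≤ L pmax} := by
      apply convexHull_min _ hconv
      intro q hq
      show L q ≤ L pmax
      rcases eq_or_ne q pmax with rfl | hne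
      · exact le_refl _
      · exact (hlt q hq hne).le
    exact this hx
  have hface : ∀ x ∈ convexHull ℝ P, L pmax ≤ L x → x = pmax := by
    intro x hx hge
    rw [hP.convexHull_eq] at hx
    obtain ⟨w, hw0, hw1, hwx⟩ := hx
    rw [Finset.centerMass_eq_of_sum_1 _ _ hw1] at hwx
    have hLx : L x = ∑ y ∈ hP.toFinset, w y * L y := by
      rw [← hwx, map_sum]
      simp [smul_eq_mul]
    have hterm : ∀ y ∈ hP.toFinset, w y * L y ≤ w y * L pmax := by
      intro y hy
      have hyP : y ∈ P := hP.mem_toFinset.mp hy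
      have : L y ≤ L pmax := by
        rcases eq_or_ne y pmax with rfl | hne
        · exact le_refl _
        · exact (hlt y hyP hne).le
      exact mul_le_mul_of_nonneg_left this (hw0 y hyP)
    have hsum : ∑ y ∈ hP.toFinset, w y * L pmax = L pmax := by
      rw [← Finset.sum_mul, hw1, one_mul]
    have hkey : ∀ y ∈ hP.toFinset, w y • (id y : ℝ × ℝ) = w y • pmax := by
      intro y hy
      rcases eq_or_ne (w y) 0 with h0 | h0
      · simp [h0]
      · have hyP : y ∈ P := hP.mem_toFinset.mp hy
        suffices hyy : y = pmax by rw [hyy]; rfl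
        by_contra hne
        have hpos : 0 < w y := lt_of_le_of_ne (hw0 y hyP) (Ne.symm h0)
        have hstrict : ∑ z ∈ hP.toFinset, w z * L z < ∑ z ∈ hP.toFinset, w z * L pmax :=
          Finset.sum_lt_sum hterm
            ⟨y, hy, mul_lt_mul_of_pos_left (hlt y hyP hne) hpos⟩
        rw [hsum] at hstrict
        rw [← hLx] at hstrict
        exact absurd hge (not_le.mpr hstrict)
    have : x = pmax := by
      rw [← hwx, Finset.sum_congr rfl hkey, ← Finset.sum_smul, hw1, one_smul]
    exact this
  refine ⟨subset_convexHull ℝ P hmem, ?_⟩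
  intro x₁ h₁ x₂ h₂ hseg
  obtain ⟨a, b, ha, hb, hab, habx⟩ := hseg
  have hL : a * L x₁ + b * L x₂ = L pmax := by
    rw [← habx]; simp [smul_eq_mul]
  have h1le : L x₁ ≤ L pmax := hub x₁ h₁
  have h2le : L x₂ ≤ L pmax := hub x₂ h₂
  have h1 : L pmax ≤ L x₁ := by
    by_contra hcon
    push_neg at hcon
    have hm := mul_lt_mul_of_pos_left hcon ha
    have hm2 := mul_le_mul_of_nonneg_left h2le hb.le
    have hs : a * L pmax + b * L pmax = L pmax := by rw [← add_mul, hab, one_mul]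
    linarith
  have h2 : L pmax ≤ L x₂ := by
    by_contra hcon
    push_neg at hcon
    have hm := mul_lt_mul_of_pos_left hcon hb
    have hm2 := mul_le_mul_of_nonneg_left h1le ha.le
    have hs : a * L pmax + b * L pmax = L pmax := by rw [← add_mul, hab, one_mul]
    linarith
  exact hface x₁ h₁ h1

lemma hull_Icc {T : Set ℝ} {a b : ℝ} (ha : a ∈ T) (hb : b ∈ T)
    (hT : ∀ y ∈ T, a ≤ y ∧ y ≤ b) : convexHull ℝ T = Set.Icc a b := by
  apply Set.Subset.antisymm
  · exact convexHull_min (fun y hy => ⟨(hT y hy).1, (hT y hy).2⟩) (convex_Icc a b)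
  · have hab : a ≤ b := (hT a ha).2
    rw [← segment_eq_Icc hab]
    exact (convex_convexHull ℝ T).segment_subset (subset_convexHull ℝ T ha)
      (subset_convexHull ℝ T hb)

/-- The linear functional version of `wv`. -/
noncomputable def wvL (v : ℤ × ℤ) : (ℝ × ℝ) →ₗ[ℝ] ℝ :=
  (v.1 : ℝ) • (LinearMap.snd ℝ ℝ ℝ) - (v.2 : ℝ) • (LinearMap.fst ℝ ℝ ℝ)

lemma wvL_apply (v : ℤ × ℤ) (p : ℝ × ℝ) : wvL v p = wv v p := by
  simp [wvL, wv, smul_eq_mul]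

theorem inactive_direction_loses_two_lines' (P : Set (ℝ × ℝ)) (hP : P.Finite)
    (hPint : ∀ p ∈ P, ∃ a b : ℤ, p = ((a : ℝ), (b : ℝ))) (hcard : 2 ≤ P.ncard)
    (v : ℤ × ℤ) (hv : v ≠ 0)
    (hmax : ∃! p, p ∈ P ∧ ∀ q ∈ P, wv v q ≤ wv v p)
    (hmin : ∃! p, p ∈ P ∧ ∀ q ∈ P, wv v p ≤ wv v q) :
    {m : ℤ | ∃ q ∈ convexHull ℝ (P \ (convexHull ℝ P).extremePoints ℝ), wv v q = (m : ℝ)}.ncard + 2 ≤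
      {m : ℤ | ∃ q ∈ convexHull ℝ P, wv v q = (m : ℝ)}.ncard := by
  classical
  obtain ⟨pmax, ⟨hmaxP, hmaxle⟩, hmaxu⟩ := hmax
  obtain ⟨pmin, ⟨hminP, hminle⟩, hminu⟩ := hmin
  have hltmax : ∀ q ∈ P, q ≠ pmax → wv v q < wv v pmax := by
    intro q hq hne
    rcases lt_or_eq_of_le (hmaxle q hq) with h | h
    · exact h
    · exact absurd (hmaxu q ⟨hq, fun r hr => by rw [h]; exact hmaxle r hr⟩) hne
  have hltmin : ∀ q ∈ P, q ≠ pmin → wv v pmin < wv v q := by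
    intro q hq hne
    rcases lt_or_eq_of_le (hminle q hq) with h | h
    · exact h
    · exact absurd (hminu q ⟨hq, fun r hr => by rw [← h]; exact hminle r hr⟩) hne
  have hExtMax : pmax ∈ (convexHull ℝ P).extremePoints ℝ := by
    apply unique_max_extreme hP (wvL v) hmaxP
    intro q hq hne
    rw [wvL_apply, wvL_apply]
    exact hltmax q hq hne
  have hExtMin : pmin ∈ (convexHull ℝ P).extremePoints ℝ := by
    apply unique_max_extreme hP (-(wvL v)) hminP
    intro q hq hne
    simp only [LinearMap.neg_apply, wvL_apply, neg_lt_neg_iff]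
    exact hltmin q hq hne
  have hZ : ∀ p ∈ P, ∃ m : ℤ, wv v p = (m : ℝ) := by
    intro p hp
    obtain ⟨a, b, rfl⟩ := hPint p hp
    refine ⟨v.1 * b - v.2 * a, ?_⟩
    unfold wv
    push_cast
    ring
  obtain ⟨M, hM⟩ := hZ pmax hmaxP
  obtain ⟨m0, hm0⟩ := hZ pmin hminP
  obtain ⟨q0, hq0P, hq0ne⟩ := Set.exists_ne_of_one_lt_ncard (show 1 < P.ncard by omega) pmax
  have hm0M : (m0 : ℝ) < (M : ℝ) := by
    calc (m0 : ℝ) = wv v pmin := hm0.symm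
      _ ≤ wv v q0 := hminle q0 hq0P
      _ < wv v pmax := hltmax q0 hq0P hq0ne
      _ = M := hM
  have hm0M' : m0 < M := by exact_mod_cast hm0M
  -- RHS
  have himg : wvL v '' convexHull ℝ P = convexHull ℝ (wvL v '' P) :=
    LinearMap.image_convexHull _ _
  have hIcc : convexHull ℝ (wvL v '' P) = Set.Icc (m0 : ℝ) (M : ℝ) := by
    apply hull_Icc
    · exact ⟨pmin, hminP, by rw [wvL_apply, hm0]⟩
    · exact ⟨pmax, hmaxP, by rw [wvL_apply, hM]⟩
    · rintro y ⟨q, hq, rfl⟩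
      rw [wvL_apply]
      exact ⟨by rw [← hm0]; exact hminle q hq, by rw [← hM]; exact hmaxle q hq⟩
  have hRHS : {m : ℤ | ∃ q ∈ convexHull ℝ P, wv v q = (m : ℝ)} = Set.Icc m0 M := by
    ext m
    simp only [Set.mem_setOf_eq, Set.mem_Icc]
    constructor
    · rintro ⟨q, hq, hqm⟩
      have hmem : (m : ℝ) ∈ Set.Icc (m0 : ℝ) (M : ℝ) := by
        rw [← hIcc, ← himg]
        exact ⟨q, hq, by rw [wvL_apply, hqm]⟩
      exact ⟨by exact_mod_cast hmem.1, by exact_mod_cast hmem.2⟩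
    · rintro ⟨h1, h2⟩
      have hmem : (m : ℝ) ∈ wvL v '' convexHull ℝ P := by
        rw [himg, hIcc]
        exact ⟨by exact_mod_cast h1, by exact_mod_cast h2⟩
      obtain ⟨q, hq, hqm⟩ := hmem
      exact ⟨q, hq, by rw [← wvL_apply]; exact hqm⟩
  rw [hRHS, ← Finset.coe_Icc, Set.ncard_coe_finset, Int.card_Icc]
  -- the peeled set
  set S : Set (ℝ × ℝ) := P \ (convexHull ℝ P).extremePoints ℝ with hSdef
  have hSsub : S ⊆ P := Set.diff_subset
  have hS : S.Finite := hP.subset hSsub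
  have hbound : ∀ q ∈ S, ∃ k : ℤ, wv v q = (k : ℝ) ∧ m0 < k ∧ k < M := by
    intro q hq
    have hqP : q ∈ P := hSsub hq
    obtain ⟨k, hk⟩ := hZ q hqP
    refine ⟨k, hk, ?_, ?_⟩
    · have hne : q ≠ pmin := fun h => hq.2 (h ▸ hExtMin)
      have h := hltmin q hqP hne
      rw [hm0, hk] at h
      exact_mod_cast h
    · have hne : q ≠ pmax := fun h => hq.2 (h ▸ hExtMax)
      have h := hltmax q hqP hne
      rw [hM, hk] at h
      exact_mod_cast h
  rcases Set.eq_empty_or_nonempty S with hemp | hne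
  · have h0 : {m : ℤ | ∃ q ∈ convexHull ℝ S, wv v q = (m : ℝ)} = ∅ := by
      rw [hemp, convexHull_empty]
      ext m
      simp
    rw [h0, Set.ncard_empty]
    omega
  · set F : Finset ℝ := hS.toFinset.image (wv v) with hFdef
    have hFne : F.Nonempty := Finset.image_nonempty.mpr (hS.toFinset_nonempty.mpr hne)
    obtain ⟨qa, hqaF, hqa⟩ := Finset.mem_image.mp (F.min'_mem hFne)
    obtain ⟨qb, hqbF, hqb⟩ := Finset.mem_image.mp (F.max'_mem hFne)
    have hqaS : qa ∈ S := hS.mem_toFinset.mp hqaF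
    have hqbS : qb ∈ S := hS.mem_toFinset.mp hqbF
    obtain ⟨ka, hka, hka1, hka2⟩ := hbound qa hqaS
    obtain ⟨kb, hkb, hkb1, hkb2⟩ := hbound qb hqbS
    have hkaF : (ka : ℝ) = F.min' hFne := by rw [← hka, hqa]
    have hkbF : (kb : ℝ) = F.max' hFne := by rw [← hkb, hqb]
    have hIcc' : convexHull ℝ (wvL v '' S) = Set.Icc ((ka : ℝ)) ((kb : ℝ)) := by
      apply hull_Icc
      · exact ⟨qa, hqaS, by rw [wvL_apply, hka]⟩
      · exact ⟨qb, hqbS, by rw [wvL_apply, hkb]⟩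
      · rintro y ⟨q, hq, rfl⟩
        rw [wvL_apply]
        have hmem : wv v q ∈ F := Finset.mem_image_of_mem _ (hS.mem_toFinset.mpr hq)
        exact ⟨hkaF ▸ F.min'_le _ hmem, hkbF ▸ F.le_max' _ hmem⟩
    have himg' : wvL v '' convexHull ℝ S = convexHull ℝ (wvL v '' S) :=
      LinearMap.image_convexHull _ _
    have hLHS : {m : ℤ | ∃ q ∈ convexHull ℝ S, wv v q = (m : ℝ)} = Set.Icc ka kb := by
      ext m
      simp only [Set.mem_setOf_eq, Set.mem_Icc]
      constructor
      · rintro ⟨q, hq, hqm⟩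
        have hmem : (m : ℝ) ∈ Set.Icc ((ka : ℝ)) ((kb : ℝ)) := by
          rw [← hIcc', ← himg']
          exact ⟨q, hq, by rw [wvL_apply, hqm]⟩
        exact ⟨by exact_mod_cast hmem.1, by exact_mod_cast hmem.2⟩
      · rintro ⟨h1, h2⟩
        have hmem : (m : ℝ) ∈ wvL v '' convexHull ℝ S := by
          rw [himg', hIcc']
          exact ⟨by exact_mod_cast h1, by exact_mod_cast h2⟩
        obtain ⟨q, hq, hqm⟩ := hmem
        exact ⟨q, hq, by rw [← wvL_apply]; exact hqm⟩
    have hkakb : ka ≤ kb := by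
      have := F.min'_le _ (F.max'_mem hFne)
      rw [← hkaF, ← hkbF] at this
      exact_mod_cast this
    rw [hLHS, ← Finset.coe_Icc, Set.ncard_coe_finset, Int.card_Icc]
    omega


/-- If `P` is a finite set of integer points with `|P| ≥ 2` on which `w_v` has a
unique maximizer and a unique minimizer, then peeling decreases by at least two
the number of integers `m` realized as `w_v`-values on the convex hull
(i.e., at least two lines of direction `v` through integer points stop meeting
the hull). -/
theorem inactive_direction_loses_two_lines (P : Set (ℝ × ℝ)) (hP : P.Finite)
    (hPint : ∀ p ∈ P, ∃ a b : ℤ, p = ((a : ℝ), (b : ℝ))) (hcard : 2 ≤ P.ncard)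
    (v : ℤ × ℤ) (hv : v ≠ 0)
    (hmax : ∃! p, p ∈ P ∧ ∀ q ∈ P, wv v q ≤ wv v p)
    (hmin : ∃! p, p ∈ P ∧ ∀ q ∈ P, wv v p ≤ wv v q) :
    {m : ℤ | ∃ q ∈ convexHull ℝ (peel P), wv v q = (m : ℝ)}.ncard + 2 ≤
      {m : ℤ | ∃ q ∈ convexHull ℝ P, wv v q = (m : ℝ)}.ncard := by
  simpa [peel] using
    inactive_direction_loses_two_lines' P hP hPint hcard v hv hmax hmin
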